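/- Let b be an element of a free group with |b| even, and suppose b = p·q⁻¹ as a reduced product (no cancellation, so |b| = |p| + |q|) with |p| = |q| = |b|/2. If p ≠ q and ‖p‖ < ‖q‖, and x ∈ F satisfies |q| ≤ |x| with qx reduced (|qx| = |q| + |x|), then replacing the pair (qx, x⁻¹q⁻¹) by (px, x⁻¹p⁻¹) strictly decreases the sum of energies: ‖px‖ + ‖x⁻¹p⁻¹‖ < ‖qx‖ + ‖x⁻¹q⁻¹‖. -/

import Mathlib

/-- The index (in `{1, …, 4g}`) of a letter of the free group of rank `2g`. -/
def letterIndex (g : ℕ) (x : Fin (2 * g) × Bool) : ℕ :=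
  if x.2 then x.1.val + 1 else 2 * g + x.1.val + 1

/-- The energy of `w`: writing the reduced word of `w` as `σ_{j₁} ⋯ σ_{j_k}`, the
energy is `Σᵢ (4g+1)^(i-1) · jᵢ`, interpreting the letter indices as digits in
base `4g+1` (the later letters of the word are the less significant digits). -/
def energy (g : ℕ) (w : FreeGroup (Fin (2 * g))) : ℕ :=
  (((FreeGroup.toWord w).reverse.zipIdx).map
    (fun p => (4 * g + 1) ^ p.2 * letterIndex g p.1)).sum

/-- Energy of a word (list of letters). -/
def wEnergy (g : ℕ) (l : List (Fin (2 * g) × Bool)) : ℕ :=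
  ((l.reverse.zipIdx).map (fun p => (4 * g + 1) ^ p.2 * letterIndex g p.1)).sum

lemma energy_eq_wEnergy (g : ℕ) (w : FreeGroup (Fin (2 * g))) :
    energy g w = wEnergy g (FreeGroup.toWord w) := rfl

lemma letterIndex_pos (g : ℕ) (a : Fin (2 * g) × Bool) : 1 ≤ letterIndex g a := by
  unfold letterIndex; split <;> omega

lemma letterIndex_le (g : ℕ) (a : Fin (2 * g) × Bool) : letterIndex g a ≤ 4 * g := by
  have := a.1.isLt
  unfold letterIndex; split <;> omega

lemma wEnergy_nil (g : ℕ) : wEnergy g [] = 0 := rfl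

lemma wEnergy_cons (g : ℕ) (a : Fin (2 * g) × Bool) (l : List (Fin (2 * g) × Bool)) :
    wEnergy g (a :: l) = wEnergy g l + (4 * g + 1) ^ l.length * letterIndex g a := by
  unfold wEnergy
  rw [List.reverse_cons, List.zipIdx_append]
  simp

lemma wEnergy_append (g : ℕ) (u v : List (Fin (2 * g) × Bool)) :
    wEnergy g (u ++ v) = wEnergy g u * (4 * g + 1) ^ v.length + wEnergy g v := by
  induction u with
  | nil => simp [wEnergy_nil]
  | cons a u ih =>
      rw [List.cons_append, wEnergy_cons, wEnergy_cons, ih, List.length_append, pow_add]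
      ring

lemma wEnergy_lt (g : ℕ) (l : List (Fin (2 * g) × Bool)) :
    wEnergy g l < (4 * g + 1) ^ l.length := by
  induction l with
  | nil => simp [wEnergy_nil]
  | cons a l ih =>
      rw [wEnergy_cons, List.length_cons, pow_succ]
      have h1 : letterIndex g a ≤ 4 * g := letterIndex_le g a
      have h2 : (4 * g + 1) ^ l.length * letterIndex g a ≤
          (4 * g + 1) ^ l.length * (4 * g) := Nat.mul_le_mul_left _ h1
      have h3 : (4 * g + 1) ^ l.length * (4 * g + 1) =
          (4 * g + 1) ^ l.length * (4 * g) + (4 * g + 1) ^ l.length := by ring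
      omega

lemma le_wEnergy_cons (g : ℕ) (a : Fin (2 * g) × Bool) (l : List (Fin (2 * g) × Bool)) :
    (4 * g + 1) ^ l.length ≤ wEnergy g (a :: l) := by
  rw [wEnergy_cons]
  have h1 : 1 ≤ letterIndex g a := letterIndex_pos g a
  have := Nat.mul_le_mul_left ((4 * g + 1) ^ l.length) h1
  omega

lemma le_wEnergy (g : ℕ) (l : List (Fin (2 * g) × Bool)) (h : l ≠ []) :
    (4 * g + 1) ^ (l.length - 1) ≤ wEnergy g l := by
  cases l with
  | nil => exact absurd rfl h
  | cons a t => simpa using le_wEnergy_cons g a t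

/-- If a product's norm adds, its word is the concatenation of the words. -/
lemma toWord_mul_of_norm_add {α : Type*} [DecidableEq α] (u v : FreeGroup α)
    (h : FreeGroup.norm (u * v) = FreeGroup.norm u + FreeGroup.norm v) :
    (u * v).toWord = u.toWord ++ v.toWord := by
  have hsub := FreeGroup.toWord_mul_sublist u v
  refine hsub.eq_of_length ?_
  simpa [FreeGroup.norm, List.length_append] using h

lemma invRev_append' {α : Type*} (u v : List (α × Bool)) :
    FreeGroup.invRev (u ++ v) = FreeGroup.invRev v ++ FreeGroup.invRev u := by
  simp [FreeGroup.invRev]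

/-- Parity: if the norm of a product is not the sum of norms, it is at most the sum minus 2. -/
lemma norm_mul_le_sub_two {α : Type*} [DecidableEq α] (u v : FreeGroup α)
    (h : FreeGroup.norm (u * v) ≠ FreeGroup.norm u + FreeGroup.norm v) :
    FreeGroup.norm (u * v) + 2 ≤ FreeGroup.norm u + FreeGroup.norm v := by
  have hred : FreeGroup.Red (u.toWord ++ v.toWord) (u * v).toWord := by
    have huv : u * v = FreeGroup.mk (u.toWord ++ v.toWord) := by
      rw [← FreeGroup.mul_mk, FreeGroup.mk_toWord, FreeGroup.mk_toWord]
    rw [huv]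
    exact FreeGroup.reduce.red
  obtain ⟨n, hn⟩ := FreeGroup.Red.length hred
  rw [List.length_append] at hn
  have h1 : FreeGroup.norm (u * v) = (u * v).toWord.length := rfl
  have h2 : FreeGroup.norm u = u.toWord.length := rfl
  have h3 : FreeGroup.norm v = v.toWord.length := rfl
  omega

/-- If a balanced end `b = p * q⁻¹` (a reduced product with `|p| = |q| = |b|/2`)
satisfies `p ≠ q` and `‖p‖ < ‖q‖`, and `x` satisfies `|q| ≤ |x|` with `q*x`
reduced, then replacing `(q*x, x⁻¹*q⁻¹)` by `(p*x, x⁻¹*p⁻¹)` strictly decreases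
the sum of energies. -/
theorem balanced_slide_decreases_energy (g : ℕ)
    (b p q x : FreeGroup (Fin (2 * g)))
    (hb : b = p * q⁻¹)
    (hbred : FreeGroup.norm b = FreeGroup.norm p + FreeGroup.norm q)
    (hlen : FreeGroup.norm p = FreeGroup.norm q)
    (hne : p ≠ q)
    (hpq : energy g p < energy g q)
    (hqx : FreeGroup.norm q ≤ FreeGroup.norm x)
    (hred : FreeGroup.norm (q * x) = FreeGroup.norm q + FreeGroup.norm x) :
    energy g (p * x) + energy g (x⁻¹ * p⁻¹) <
      energy g (q * x) + energy g (x⁻¹ * q⁻¹) := by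
  -- g ≥ 1, since otherwise the free group is trivial and p = q
  have hg : 1 ≤ g := by
    by_contra hg0
    apply hne
    have h0 : 2 * g = 0 := by omega
    have htriv : ∀ w : FreeGroup (Fin (2 * g)), w = 1 := by
      intro w
      rw [← FreeGroup.toWord_eq_nil_iff]
      cases hw : w.toWord with
      | nil => rfl
      | cons a t => exact absurd a.1.isLt (by omega)
    rw [htriv p, htriv q]
  obtain ⟨n, hn⟩ : ∃ n, FreeGroup.norm q = n := ⟨_, rfl⟩
  obtain ⟨m, hm⟩ : ∃ m, FreeGroup.norm x = m := ⟨_, rfl⟩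
  -- q ≠ 1, so n ≥ 1
  have hq1 : q ≠ 1 := by
    intro h
    apply hne
    rw [h, FreeGroup.norm_one] at hlen
    rw [h]
    exact FreeGroup.norm_eq_zero.1 hlen
  have hn1 : 1 ≤ n := by
    rcases Nat.eq_zero_or_pos n with h | h
    · exact absurd (FreeGroup.norm_eq_zero.1 (hn.trans h)) hq1
    · exact h
  have hnm : n ≤ m := by omega
  -- decomposition of q*x and x⁻¹*q⁻¹
  have hqxw : (q * x).toWord = q.toWord ++ x.toWord := toWord_mul_of_norm_add q x hred
  have hxqw : (x⁻¹ * q⁻¹).toWord = x⁻¹.toWord ++ q⁻¹.toWord := by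
    rw [show x⁻¹ * q⁻¹ = (q * x)⁻¹ by rw [mul_inv_rev], FreeGroup.toWord_inv, hqxw,
      invRev_append', ← FreeGroup.toWord_inv, ← FreeGroup.toWord_inv]
  -- lengths
  have hlq : q.toWord.length = n := hn
  have hlp : p.toWord.length = n := hlen.trans hn
  have hlx : x.toWord.length = m := hm
  have hlxi : x⁻¹.toWord.length = m := by
    have : FreeGroup.norm x⁻¹ = m := by rw [FreeGroup.norm_inv_eq]; exact hm
    exact this
  have hlqi : q⁻¹.toWord.length = n := by
    have : FreeGroup.norm q⁻¹ = n := by rw [FreeGroup.norm_inv_eq]; exact hn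
    exact this
  have hlpi : p⁻¹.toWord.length = n := by
    have : FreeGroup.norm p⁻¹ = n := by rw [FreeGroup.norm_inv_eq, hlen]; exact hn
    exact this
  -- energies of the q-side
  have hEqx : energy g (q * x) =
      wEnergy g q.toWord * (4 * g + 1) ^ m + wEnergy g x.toWord := by
    rw [energy_eq_wEnergy, hqxw, wEnergy_append, hlx]
  have hExq : energy g (x⁻¹ * q⁻¹) =
      wEnergy g x⁻¹.toWord * (4 * g + 1) ^ n + wEnergy g q⁻¹.toWord := by
    rw [energy_eq_wEnergy, hxqw, wEnergy_append, hlqi]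
  -- the q*x word is nonempty of length n + m, so its energy is ≥ B^(n+m-1)
  have hqxlow : (4 * g + 1) ^ (n + m - 1) ≤ energy g (q * x) := by
    rw [energy_eq_wEnergy]
    have hlen' : (q * x).toWord.length = n + m := by
      rw [hqxw, List.length_append, hlq, hlx]
    have hne' : (q * x).toWord ≠ [] := by
      intro h
      rw [h] at hlen'
      simp at hlen'
      omega
    have := le_wEnergy g (q * x).toWord hne'
    rwa [hlen'] at this
  by_cases hcase : FreeGroup.norm (p * x) = FreeGroup.norm p + FreeGroup.norm x
  · -- no cancellation in p*x
    have hpxw : (p * x).toWord = p.toWord ++ x.toWord := toWord_mul_of_norm_add p x hcase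
    have hxpw : (x⁻¹ * p⁻¹).toWord = x⁻¹.toWord ++ p⁻¹.toWord := by
      rw [show x⁻¹ * p⁻¹ = (p * x)⁻¹ by rw [mul_inv_rev], FreeGroup.toWord_inv, hpxw,
        invRev_append', ← FreeGroup.toWord_inv, ← FreeGroup.toWord_inv]
    have hEpx : energy g (p * x) =
        wEnergy g p.toWord * (4 * g + 1) ^ m + wEnergy g x.toWord := by
      rw [energy_eq_wEnergy, hpxw, wEnergy_append, hlx]
    have hExp : energy g (x⁻¹ * p⁻¹) =
        wEnergy g x⁻¹.toWord * (4 * g + 1) ^ n + wEnergy g p⁻¹.toWord := by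
      rw [energy_eq_wEnergy, hxpw, wEnergy_append, hlpi]
    rw [hEpx, hExp, hEqx, hExq]
    have hP : wEnergy g p.toWord < wEnergy g q.toWord := hpq
    have hPi : wEnergy g p⁻¹.toWord < (4 * g + 1) ^ n := by
      have := wEnergy_lt g p⁻¹.toWord
      rwa [hlpi] at this
    have hBn : (4 * g + 1) ^ n ≤ (4 * g + 1) ^ m := Nat.pow_le_pow_right (by omega) hnm
    have h2 : wEnergy g p.toWord * (4 * g + 1) ^ m + (4 * g + 1) ^ m ≤
        wEnergy g q.toWord * (4 * g + 1) ^ m := by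
      have h2' : (wEnergy g p.toWord + 1) * (4 * g + 1) ^ m ≤
          wEnergy g q.toWord * (4 * g + 1) ^ m :=
        Nat.mul_le_mul_right _ (by omega)
      have h2'' : (wEnergy g p.toWord + 1) * (4 * g + 1) ^ m =
          wEnergy g p.toWord * (4 * g + 1) ^ m + (4 * g + 1) ^ m := by ring
      omega
    omega
  · -- cancellation in p*x : |p*x| ≤ n + m - 2
    have hshort : FreeGroup.norm (p * x) + 2 ≤ n + m := by
      have := norm_mul_le_sub_two p x hcase
      omega
    have hnm2 : 2 ≤ n + m := by omega
    have hlpx : (p * x).toWord.length ≤ n + m - 2 := by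
      have : FreeGroup.norm (p * x) = (p * x).toWord.length := rfl
      omega
    have hEpx : energy g (p * x) < (4 * g + 1) ^ (n + m - 2) :=
      lt_of_lt_of_le (wEnergy_lt g _) (Nat.pow_le_pow_right (by omega) hlpx)
    have hExp : energy g (x⁻¹ * p⁻¹) < (4 * g + 1) ^ (n + m - 2) := by
      have hlxp : (x⁻¹ * p⁻¹).toWord.length ≤ n + m - 2 := by
        have h1 : FreeGroup.norm (x⁻¹ * p⁻¹) = (x⁻¹ * p⁻¹).toWord.length := rfl
        have h2 : FreeGroup.norm (x⁻¹ * p⁻¹) = FreeGroup.norm (p * x) := by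
          rw [← mul_inv_rev, FreeGroup.norm_inv_eq]
        omega
      exact lt_of_lt_of_le (wEnergy_lt g _) (Nat.pow_le_pow_right (by omega) hlxp)
    have hstep : 2 * (4 * g + 1) ^ (n + m - 2) < (4 * g + 1) ^ (n + m - 1) := by
      have he : n + m - 1 = (n + m - 2) + 1 := by omega
      rw [he, pow_succ]
      have hp : 1 ≤ (4 * g + 1) ^ (n + m - 2) := Nat.one_le_pow _ _ (by omega)
      have h5 : (4 * g + 1) ^ (n + m - 2) * 5 ≤ (4 * g + 1) ^ (n + m - 2) * (4 * g + 1) :=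
        Nat.mul_le_mul_left _ (by omega)
      omega
    have hmain : energy g (p * x) + energy g (x⁻¹ * p⁻¹) < energy g (q * x) := by
      calc energy g (p * x) + energy g (x⁻¹ * p⁻¹)
          < 2 * (4 * g + 1) ^ (n + m - 2) := by omega
        _ < (4 * g + 1) ^ (n + m - 1) := hstep
        _ ≤ energy g (q * x) := hqxlow
    omega
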